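/- Let φ : 𝔻 → 𝔻 be holomorphic. Then the composition operator C_φ is an isometry on the Bloch space of 𝔻 if and only if φ(0) = 0 and β_φ = sup_{z∈𝔻} (1−|z|²)|φ′(z)| = 1. -/

import Mathlib

open Complex Metric Set

/-- The set of values `(1-|z|²)|f'(z)|` for `z` in the unit disk. -/
def blochValues (f : ℂ → ℂ) : Set ℝ :=
  {r : ℝ | ∃ z ∈ ball (0 : ℂ) 1, r = (1 - ‖z‖ ^ 2) * ‖deriv f z‖}

/-- The Bloch seminorm `β_f = sup_{z ∈ 𝔻} (1-|z|²)|f'(z)|`. -/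
noncomputable def blochSemi (f : ℂ → ℂ) : ℝ := sSup (blochValues f)

/-- `f` is a Bloch function on the unit disk: it is holomorphic there and its
Bloch seminorm is finite. -/
def IsBlochFn (f : ℂ → ℂ) : Prop :=
  DifferentiableOn ℂ f (ball (0 : ℂ) 1) ∧ BddAbove (blochValues f)

/-- The Bloch norm `‖f‖_B = |f(0)| + β_f`. -/
noncomputable def blochNorm (f : ℂ → ℂ) : ℝ := ‖f 0‖ + blochSemi f

/-- The composition operator `C_φ` is an isometry on the Bloch space of `𝔻`. -/
def IsIsometryCompOp (φ : ℂ → ℂ) : Prop :=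
  ∀ f : ℂ → ℂ, IsBlochFn f → IsBlochFn (f ∘ φ) ∧ blochNorm (f ∘ φ) = blochNorm f

noncomputable def mob (a z : ℂ) : ℂ := (a - z) / (1 - (starRingEnd ℂ) a * z)

lemma sq_norm_eq (w : ℂ) : ‖w‖^2 = Complex.normSq w := by
  rw [Complex.sq_norm]

lemma mob_sq_identity (a z : ℂ) :
    ‖1 - (starRingEnd ℂ) a * z‖^2 - ‖a - z‖^2 = (1 - ‖a‖^2) * (1 - ‖z‖^2) := by
  simp only [sq_norm_eq, Complex.normSq_apply, Complex.sub_re, Complex.sub_im,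
    Complex.mul_re, Complex.mul_im, Complex.one_re, Complex.one_im, Complex.conj_re,
    Complex.conj_im]
  ring

lemma mob_denom_norm_lt {a z : ℂ} (ha : ‖a‖ < 1) (hz : ‖z‖ < 1) :
    ‖(starRingEnd ℂ) a * z‖ < 1 := by
  rw [norm_mul, RCLike.norm_conj]
  nlinarith [norm_nonneg a, norm_nonneg z]

lemma mob_denom_ne {a z : ℂ} (ha : ‖a‖ < 1) (hz : ‖z‖ < 1) :
    1 - (starRingEnd ℂ) a * z ≠ 0 := by
  intro h
  have h2 : (1:ℂ) = (starRingEnd ℂ) a * z := by linear_combination h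
  have := mob_denom_norm_lt ha hz
  rw [← h2] at this; simp at this

lemma mob_zero (a : ℂ) : mob a 0 = a := by simp [mob]

lemma mob_self (a : ℂ) : mob a a = 0 := by simp [mob]

/-- `‖a - u‖ ≤ ‖1 - ā u‖` when `‖a‖ ≤ 1`, `‖u‖ ≤ 1`. -/
lemma mob_num_le_denom {a u : ℂ} (ha : ‖a‖ ≤ 1) (hu : ‖u‖ ≤ 1) :
    ‖a - u‖ ≤ ‖1 - (starRingEnd ℂ) a * u‖ := by
  have h := mob_sq_identity a u
  have h1 : (0:ℝ) ≤ 1 - ‖a‖^2 := by nlinarith [norm_nonneg a]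
  have h2 : (0:ℝ) ≤ 1 - ‖u‖^2 := by nlinarith [norm_nonneg u]
  have h3 : ‖a - u‖^2 ≤ ‖1 - (starRingEnd ℂ) a * u‖^2 := by nlinarith [mul_nonneg h1 h2]
  exact (pow_le_pow_iff_left₀ (norm_nonneg _) (norm_nonneg _) (by norm_num)).mp h3

lemma one_sub_sq_mob (a z : ℂ) (ha : ‖a‖ < 1) (hz : ‖z‖ < 1) :
    1 - ‖mob a z‖^2 = (1 - ‖a‖^2) * (1 - ‖z‖^2) / ‖1 - (starRingEnd ℂ) a * z‖^2 := by
  have hd := mob_denom_ne ha hz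
  have hd2 : ‖1 - (starRingEnd ℂ) a * z‖^2 ≠ 0 := pow_ne_zero 2 (norm_ne_zero_iff.mpr hd)
  have h := mob_sq_identity a z
  rw [mob, norm_div, div_pow]
  rw [eq_div_iff hd2, sub_mul, div_mul_cancel₀ _ hd2]
  linarith [h]

lemma mob_mem_ball {a z : ℂ} (ha : ‖a‖ < 1) (hz : ‖z‖ < 1) : ‖mob a z‖ < 1 := by
  have h := one_sub_sq_mob a z ha hz
  have hpos : (1 - ‖a‖^2) * (1 - ‖z‖^2) / ‖1 - (starRingEnd ℂ) a * z‖^2 > 0 := by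
    have hne : 0 < ‖1 - (starRingEnd ℂ) a * z‖ := norm_pos_iff.mpr (mob_denom_ne ha hz)
    have h1 : (0:ℝ) < 1 - ‖a‖^2 := by nlinarith [norm_nonneg a]
    have h2 : (0:ℝ) < 1 - ‖z‖^2 := by nlinarith [norm_nonneg z]
    exact div_pos (mul_pos h1 h2) (by positivity)
  nlinarith [norm_nonneg (mob a z)]

lemma mob_invol {a z : ℂ} (ha : ‖a‖ < 1) (hz : ‖z‖ < 1) : mob a (mob a z) = z := by
  have hd := mob_denom_ne ha hz
  have hd3 : 1 - (starRingEnd ℂ) a * a ≠ 0 := mob_denom_ne ha ha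
  have hd2 := mob_denom_ne ha (mob_mem_ball ha hz)
  simp only [mob] at hd2 ⊢
  rw [div_eq_iff hd2]
  have hd' : 1 - z * (starRingEnd ℂ) a ≠ 0 := by rwa [mul_comm]
  field_simp
  ring

lemma mob_differentiableAt {a z : ℂ} (ha : ‖a‖ < 1) (hz : ‖z‖ < 1) :
    DifferentiableAt ℂ (mob a) z := by
  apply DifferentiableAt.div
  · fun_prop
  · fun_prop
  · exact mob_denom_ne ha hz

lemma mob_deriv {a z : ℂ} (ha : ‖a‖ < 1) (hz : ‖z‖ < 1) :
    deriv (mob a) z = ((Complex.normSq a : ℂ) - 1) / (1 - (starRingEnd ℂ) a * z)^2 := by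
  have hd := mob_denom_ne ha hz
  have h1 : HasDerivAt (fun z : ℂ => a - z) (-1) z := by
    simpa using (hasDerivAt_id z).const_sub a
  have h2 : HasDerivAt (fun z : ℂ => 1 - (starRingEnd ℂ) a * z) (-(starRingEnd ℂ) a) z := by
    simpa using ((hasDerivAt_id z).const_mul ((starRingEnd ℂ) a)).const_sub 1
  have := (h1.div h2 hd).deriv
  rw [show mob a = (fun z : ℂ => a - z) / (fun z : ℂ => 1 - (starRingEnd ℂ) a * z) from rfl, this]
  rw [div_eq_div_iff (pow_ne_zero 2 hd) (pow_ne_zero 2 hd)]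
  linear_combination ((1 - (starRingEnd ℂ) a * z)^2) * Complex.mul_conj a

lemma mob_deriv_identity {a z : ℂ} (ha : ‖a‖ < 1) (hz : ‖z‖ < 1) :
    (1 - ‖z‖^2) * ‖deriv (mob a) z‖ = 1 - ‖mob a z‖^2 := by
  rw [mob_deriv ha hz, one_sub_sq_mob a z ha hz]
  rw [norm_div, norm_pow]
  have h1 : ‖(Complex.normSq a : ℂ) - 1‖ = 1 - ‖a‖^2 := by
    rw [← Complex.ofReal_one, ← Complex.ofReal_sub, Complex.norm_real]
    rw [Real.norm_eq_abs, abs_of_nonpos (by nlinarith [sq_norm_eq a, norm_nonneg a, ha])]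
    rw [← sq_norm_eq]; ring
  rw [h1]
  ring

lemma mob_mapsTo {a : ℂ} (ha : ‖a‖ < 1) : MapsTo (mob a) (ball (0:ℂ) 1) (ball 0 1) := by
  intro z hz
  rw [mem_ball_zero_iff] at hz ⊢
  exact mob_mem_ball ha hz

lemma mob_diffOn {a : ℂ} (ha : ‖a‖ < 1) : DifferentiableOn ℂ (mob a) (ball (0:ℂ) 1) := by
  intro z hz
  exact (mob_differentiableAt ha (mem_ball_zero_iff.mp hz)).differentiableWithinAt

/-- The normalized map `σ_{φ(z₀)} ∘ φ ∘ σ_{z₀}`. -/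
noncomputable def nrm (φ : ℂ → ℂ) (z₀ : ℂ) : ℂ → ℂ := mob (φ z₀) ∘ φ ∘ mob z₀

lemma phi_mem {φ : ℂ → ℂ} (hmap : MapsTo φ (ball (0 : ℂ) 1) (ball (0 : ℂ) 1))
    {z : ℂ} (hz : ‖z‖ < 1) : ‖φ z‖ < 1 :=
  mem_ball_zero_iff.mp (hmap (mem_ball_zero_iff.mpr hz))

section Nrm

variable {φ : ℂ → ℂ} {z₀ : ℂ}
  (hmap : MapsTo φ (ball (0 : ℂ) 1) (ball (0 : ℂ) 1))
  (hφ : DifferentiableOn ℂ φ (ball (0 : ℂ) 1))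
  (hz₀ : ‖z₀‖ < 1)

include hmap hφ hz₀ in
lemma nrm_diffOn : DifferentiableOn ℂ (nrm φ z₀) (ball (0:ℂ) 1) := by
  have hb := phi_mem hmap hz₀
  exact (mob_diffOn hb).comp (hφ.comp (mob_diffOn hz₀) (mob_mapsTo hz₀))
    ((hmap.comp (mob_mapsTo hz₀)))

include hmap hz₀ in
lemma nrm_mapsTo : MapsTo (nrm φ z₀) (ball (0:ℂ) 1) (ball (0:ℂ) 1) := by
  have hb := phi_mem hmap hz₀
  exact (mob_mapsTo hb).comp (hmap.comp (mob_mapsTo hz₀))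

omit hmap hφ hz₀ in
lemma nrm_zero : nrm φ z₀ 0 = 0 := by
  simp only [nrm, Function.comp_apply, mob_zero, mob_self]

include hmap hφ hz₀ in
lemma nrm_deriv {u : ℂ} (hu : ‖u‖ < 1) :
    deriv (nrm φ z₀) u =
      deriv (mob (φ z₀)) (φ (mob z₀ u)) * (deriv φ (mob z₀ u) * deriv (mob z₀) u) := by
  have hb := phi_mem hmap hz₀
  have hw : ‖mob z₀ u‖ < 1 := mob_mem_ball hz₀ hu
  have hv : ‖φ (mob z₀ u)‖ < 1 := phi_mem hmap hw
  have h1 : DifferentiableAt ℂ φ (mob z₀ u) :=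
    hφ.differentiableAt (isOpen_ball.mem_nhds (mem_ball_zero_iff.mpr hw))
  have h2 : DifferentiableAt ℂ (mob z₀) u := mob_differentiableAt hz₀ hu
  have h3 : DifferentiableAt ℂ (φ ∘ mob z₀) u := h1.comp u h2
  have h4 : DifferentiableAt ℂ (mob (φ z₀)) ((φ ∘ mob z₀) u) := mob_differentiableAt hb hv
  rw [nrm, deriv_comp u h4 h3, deriv_comp u h1 h2]
  rfl

include hmap hφ hz₀ in
lemma nrm_invariance {u : ℂ} (hu : ‖u‖ < 1) :
    (1 - ‖u‖^2) * ‖deriv (nrm φ z₀) u‖ * (1 - ‖φ (mob z₀ u)‖^2) =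
      (1 - ‖mob z₀ u‖^2) * ‖deriv φ (mob z₀ u)‖ * (1 - ‖nrm φ z₀ u‖^2) := by
  have hb := phi_mem hmap hz₀
  have hw : ‖mob z₀ u‖ < 1 := mob_mem_ball hz₀ hu
  have hv : ‖φ (mob z₀ u)‖ < 1 := phi_mem hmap hw
  have e1 := mob_deriv_identity hz₀ hu
  have e2 := mob_deriv_identity hb hv
  have e3 : nrm φ z₀ u = mob (φ z₀) (φ (mob z₀ u)) := rfl
  rw [nrm_deriv hmap hφ hz₀ hu, norm_mul, norm_mul, e3]
  linear_combination (‖deriv φ (mob z₀ u)‖ * (1 - ‖mob (φ z₀) (φ (mob z₀ u))‖^2)) * e1 +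
    ((1 - ‖u‖^2) * ‖deriv (mob z₀) u‖ * ‖deriv φ (mob z₀ u)‖) * e2

include hmap hφ hz₀ in
lemma nrm_lambda :
    ‖deriv (nrm φ z₀) 0‖ * (1 - ‖φ z₀‖^2) = (1 - ‖z₀‖^2) * ‖deriv φ z₀‖ := by
  have h := nrm_invariance hmap hφ hz₀ (u := 0) (by norm_num)
  rw [mob_zero, nrm_zero] at h
  simp only [norm_zero] at h
  linarith [h]

include hmap hφ hz₀ in
lemma nrm_deriv_zero_le_one : ‖deriv (nrm φ z₀) 0‖ ≤ 1 := by
  have h := Complex.norm_deriv_le_one_of_mapsTo_ball (c := 0) (R := 1)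
    (nrm_diffOn hmap hφ hz₀) (by rw [nrm_zero]; exact (nrm_mapsTo hmap hz₀).mono_right ball_subset_closedBall) one_pos
  exact h

include hmap hφ in
lemma schwarz_pick {z : ℂ} (hz : ‖z‖ < 1) :
    (1 - ‖z‖^2) * ‖deriv φ z‖ ≤ 1 - ‖φ z‖^2 := by
  have h1 := nrm_lambda hmap hφ hz
  have h2 := nrm_deriv_zero_le_one hmap hφ hz
  have h3 : (0:ℝ) ≤ 1 - ‖φ z‖^2 := by nlinarith [phi_mem hmap hz, norm_nonneg (φ z)]
  nlinarith

end Nrm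

/-- Quantitative rigidity: a self-map of the disk fixing `0` with derivative `λ` at `0`
is within `s^2(1-|λ|^2)/(1-s)` of `w ↦ λ w` on `‖w‖ ≤ s`. -/
lemma rigid {ψ : ℂ → ℂ} (hd : DifferentiableOn ℂ ψ (ball (0:ℂ) 1))
    (hm : MapsTo ψ (ball (0:ℂ) 1) (ball (0:ℂ) 1)) (h0 : ψ 0 = 0)
    {s : ℝ} (hs1 : s < 1) {w : ℂ} (hw : ‖w‖ ≤ s) :
    ‖ψ w - deriv ψ 0 * w‖ ≤ s^2 * (1 - ‖deriv ψ 0‖^2) / (1 - s) := by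
  have hs0 : 0 ≤ s := le_trans (norm_nonneg w) hw
  have hwb : w ∈ ball (0:ℂ) 1 := mem_ball_zero_iff.mpr (lt_of_le_of_lt hw hs1)
  set h : ℂ → ℂ := dslope ψ 0 with hh
  have hdh : DifferentiableOn ℂ h (ball (0:ℂ) 1) :=
    (differentiableOn_dslope (ball_mem_nhds _ one_pos)).mpr hd
  have hmaps : MapsTo ψ (ball (0:ℂ) 1) (ball (ψ 0) 1) := by rwa [h0]
  have hb : ∀ z ∈ ball (0:ℂ) 1, ‖h z‖ ≤ 1 := fun z hz => by
    simpa using Complex.norm_dslope_le_div_of_mapsTo_ball hd (hmaps.mono_right ball_subset_closedBall) hz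
  have hlam : h 0 = deriv ψ 0 := dslope_same ψ 0
  have hpsi : ∀ z : ℂ, ψ z = z * h z := by
    intro z
    rcases eq_or_ne z 0 with rfl | hz
    · simp [h0]
    · rw [hh, dslope_of_ne ψ hz, slope_def_field, h0, sub_zero, sub_zero]
      field_simp [hz]
  set lam := deriv ψ 0 with hlamdef
  have hlam1 : ‖lam‖ ≤ 1 := by rw [← hlam]; exact hb 0 (mem_ball_self one_pos)
  rcases lt_or_eq_of_le hlam1 with hlt | heq
  -- case ‖λ‖ < 1
  · have hden : ∀ z ∈ ball (0:ℂ) 1, 1 - (starRingEnd ℂ) lam * h z ≠ 0 := by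
      intro z hz
      intro hcontra
      have h2 : (1:ℂ) = (starRingEnd ℂ) lam * h z := by linear_combination hcontra
      have : ‖(starRingEnd ℂ) lam * h z‖ ≤ ‖lam‖ * 1 := by
        rw [norm_mul, RCLike.norm_conj]
        exact mul_le_mul_of_nonneg_left (hb z hz) (norm_nonneg _)
      rw [← h2] at this
      simp only [norm_one, mul_one] at this
      linarith
    set H : ℂ → ℂ := fun z => (lam - h z) / (1 - (starRingEnd ℂ) lam * h z) with hH
    have hdH : DifferentiableOn ℂ H (ball (0:ℂ) 1) := by
      apply DifferentiableOn.div
      · exact (differentiableOn_const lam).sub hdh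
      · exact (differentiableOn_const 1).sub ((differentiableOn_const _).mul hdh)
      · exact hden
    have hH0 : H 0 = 0 := by
      simp only [hH, hlam]
      simp
    have hHle : ∀ z ∈ ball (0:ℂ) 1, ‖H z‖ ≤ 1 := by
      intro z hz
      rw [hH]
      rw [norm_div]
      rcases eq_or_ne (1 - (starRingEnd ℂ) lam * h z) 0 with hc | hc
      · exact absurd hc (hden z hz)
      · rw [div_le_one (norm_pos_iff.mpr hc)]
        exact mob_num_le_denom hlt.le (hb z hz)
    -- Schwarz: ‖H w‖ ≤ ‖w‖
    have hHw : ‖H w‖ ≤ ‖w‖ := by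
      have key : ∀ η : ℝ, 0 < η → ‖H w‖ ≤ (1 + η) * ‖w‖ := by
        intro η hη
        have hmapsH : MapsTo H (ball (0:ℂ) 1) (ball (H 0) (1 + η)) := by
          intro z hz
          rw [mem_ball, hH0, dist_zero_right]
          exact lt_of_le_of_lt (hHle z hz) (by linarith)
        have := Complex.dist_le_div_mul_dist_of_mapsTo_ball hdH (hmapsH.mono_right ball_subset_closedBall) hwb
        rw [hH0, dist_zero_right, dist_zero_right, div_one] at this
        exact this
      rcases eq_or_ne w 0 with rfl | hw0
      · simp [hH0]
      · have hwpos : 0 < ‖w‖ := norm_pos_iff.mpr hw0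
        refine le_of_forall_pos_le_add ?_
        intro ε hε
        have h2 := key (ε / ‖w‖) (div_pos hε hwpos)
        calc ‖H w‖ ≤ (1 + ε / ‖w‖) * ‖w‖ := h2
          _ = ‖w‖ + ε := by rw [add_mul, one_mul, div_mul_cancel₀ _ (ne_of_gt hwpos)]
    -- unfold the bound
    have hineq : ‖lam - h w‖ ≤ s * ((1 - ‖lam‖^2) + ‖lam - h w‖) := by
      have e1 : ‖lam - h w‖ = ‖H w‖ * ‖1 - (starRingEnd ℂ) lam * h w‖ := by
        rw [hH]
        rw [norm_div, div_mul_cancel₀]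
        exact norm_ne_zero_iff.mpr (hden w hwb)
      have e2 : ‖1 - (starRingEnd ℂ) lam * h w‖ ≤ (1 - ‖lam‖^2) + ‖lam - h w‖ := by
        have : (1:ℂ) - (starRingEnd ℂ) lam * h w
            = (1 - (starRingEnd ℂ) lam * lam) + (starRingEnd ℂ) lam * (lam - h w) := by ring
        rw [this]
        refine le_trans (norm_add_le _ _) ?_
        have e3 : ‖(1:ℂ) - (starRingEnd ℂ) lam * lam‖ = 1 - ‖lam‖^2 := by
          rw [show (starRingEnd ℂ) lam * lam = ((Complex.normSq lam : ℝ) : ℂ) by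
            rw [mul_comm, Complex.mul_conj]]
          rw [show ((1:ℂ) - ((Complex.normSq lam : ℝ) : ℂ)) = (((1 - Complex.normSq lam : ℝ)) : ℂ) by
            push_cast; ring]
          rw [Complex.norm_real, Real.norm_eq_abs, _root_.abs_of_nonneg (by nlinarith [sq_norm_eq lam, norm_nonneg lam, hlt])]
          rw [← sq_norm_eq]
        have e4 : ‖(starRingEnd ℂ) lam * (lam - h w)‖ ≤ ‖lam - h w‖ := by
          rw [norm_mul, RCLike.norm_conj]
          nlinarith [norm_nonneg (lam - h w)]
        linarith
      calc ‖lam - h w‖ = ‖H w‖ * ‖1 - (starRingEnd ℂ) lam * h w‖ := e1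
        _ ≤ s * ‖1 - (starRingEnd ℂ) lam * h w‖ := by
            apply mul_le_mul_of_nonneg_right (le_trans hHw hw) (norm_nonneg _)
        _ ≤ s * ((1 - ‖lam‖^2) + ‖lam - h w‖) :=
            mul_le_mul_of_nonneg_left e2 hs0
    have hx : ‖lam - h w‖ ≤ s * (1 - ‖lam‖^2) / (1 - s) := by
      rw [le_div_iff₀ (by linarith : (0:ℝ) < 1 - s)]
      nlinarith [hineq]
    calc ‖ψ w - lam * w‖ = ‖w‖ * ‖lam - h w‖ := by
          rw [hpsi w, show w * h w - lam * w = -(w * (lam - h w)) by ring, norm_neg, norm_mul]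
      _ ≤ s * (s * (1 - ‖lam‖^2) / (1 - s)) :=
          mul_le_mul hw hx (norm_nonneg _) hs0
      _ = s^2 * (1 - ‖lam‖^2) / (1 - s) := by ring
  -- case ‖λ‖ = 1 : maximum principle, h is constant
  · have hone : ‖h 0‖ = 1 := by rw [hlam]; exact heq
    have hmax : IsMaxOn (norm ∘ h) (ball (0:ℂ) 1) 0 := by
      intro z hz
      simp only [Function.comp_apply, Set.mem_setOf_eq]
      rw [hone]
      exact hb z hz
    have hconst := Complex.eqOn_of_isPreconnected_of_isMaxOn_norm
      (convex_ball (0:ℂ) 1).isPreconnected isOpen_ball hdh (mem_ball_self one_pos) hmax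
    have hcw : h w = h 0 := hconst hwb
    have hz0 : ψ w - lam * w = 0 := by rw [hpsi w, hcw, hlam]; ring
    rw [hz0, norm_zero, show (1:ℝ) - ‖lam‖^2 = 0 by rw [heq]; ring]
    simp

/-- Cauchy-type estimate via the Schwarz lemma: a function bounded by `E` on `‖z‖ < s₂` has
derivative bounded by `2E/(s₂-s₁)` on `‖w‖ ≤ s₁`. -/
lemma deriv_close {g : ℂ → ℂ} {s₁ s₂ E : ℝ} (hs0 : 0 ≤ s₁) (hs12 : s₁ < s₂) (hs2 : s₂ ≤ 1)
    (hg : DifferentiableOn ℂ g (ball (0:ℂ) 1)) (hE : 0 ≤ E)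
    (hbound : ∀ z : ℂ, ‖z‖ < s₂ → ‖g z‖ ≤ E) {w : ℂ} (hw : ‖w‖ ≤ s₁) :
    ‖deriv g w‖ ≤ 2 * E / (s₂ - s₁) := by
  have hd : (0:ℝ) < s₂ - s₁ := by linarith
  have hsub : ∀ z : ℂ, z ∈ ball w (s₂ - s₁) → ‖z‖ < s₂ := by
    intro z hz
    rw [mem_ball, dist_eq_norm] at hz
    calc ‖z‖ = ‖(z - w) + w‖ := by ring_nf
      _ ≤ ‖z - w‖ + ‖w‖ := norm_add_le _ _
      _ < (s₂ - s₁) + s₁ := by linarith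
      _ = s₂ := by ring
  have hsub2 : ball w (s₂ - s₁) ⊆ ball (0:ℂ) 1 := by
    intro z hz
    rw [mem_ball_zero_iff]
    exact lt_of_lt_of_le (hsub z hz) hs2
  have hgd : DifferentiableOn ℂ g (ball w (s₂ - s₁)) := hg.mono hsub2
  have hwmem : ‖w‖ < s₂ := lt_of_le_of_lt hw hs12
  refine le_of_forall_pos_le_add (fun ε hε => ?_)
  have hmaps : MapsTo g (ball w (s₂ - s₁)) (ball (g w) (2 * E + ε * (s₂ - s₁))) := by
    intro z hz
    rw [mem_ball, dist_eq_norm]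
    calc ‖g z - g w‖ ≤ ‖g z‖ + ‖g w‖ := norm_sub_le _ _
      _ ≤ E + E := add_le_add (hbound z (hsub z hz)) (hbound w hwmem)
      _ < 2 * E + ε * (s₂ - s₁) := by nlinarith
  have h := Complex.norm_deriv_le_div_of_mapsTo_ball hgd (hmaps.mono_right ball_subset_closedBall) hd
  calc ‖deriv g w‖ ≤ (2 * E + ε * (s₂ - s₁)) / (s₂ - s₁) := h
    _ = 2 * E / (s₂ - s₁) + ε := by field_simp

lemma mem_blochValues {f : ℂ → ℂ} {z : ℂ} (hz : z ∈ ball (0:ℂ) 1) :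
    (1 - ‖z‖ ^ 2) * ‖deriv f z‖ ∈ blochValues f := ⟨z, hz, rfl⟩

lemma blochValues_nonneg {f : ℂ → ℂ} {r : ℝ} (hr : r ∈ blochValues f) : 0 ≤ r := by
  obtain ⟨z, hz, rfl⟩ := hr
  have hz1 : ‖z‖ < 1 := mem_ball_zero_iff.mp hz
  have : (0:ℝ) ≤ 1 - ‖z‖^2 := by nlinarith [norm_nonneg z]
  positivity

lemma blochValues_nonempty (f : ℂ → ℂ) : (blochValues f).Nonempty :=
  ⟨(1 - ‖(0:ℂ)‖ ^ 2) * ‖deriv f 0‖, 0, mem_ball_self one_pos, rfl⟩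

lemma blochSemi_nonneg (f : ℂ → ℂ) : 0 ≤ blochSemi f :=
  Real.sSup_nonneg fun _ hr => blochValues_nonneg hr

section Comp

variable {φ f : ℂ → ℂ}
  (hmap : MapsTo φ (ball (0 : ℂ) 1) (ball (0 : ℂ) 1))
  (hφ : DifferentiableOn ℂ φ (ball (0 : ℂ) 1))

include hmap hφ in
lemma comp_deriv_eq (hf : DifferentiableOn ℂ f (ball (0:ℂ) 1)) {z : ℂ} (hz : ‖z‖ < 1) :
    deriv (f ∘ φ) z = deriv f (φ z) * deriv φ z :=
  deriv_comp z
    (hf.differentiableAt (isOpen_ball.mem_nhds (mem_ball_zero_iff.mpr (phi_mem hmap hz))))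
    (hφ.differentiableAt (isOpen_ball.mem_nhds (mem_ball_zero_iff.mpr hz)))

include hmap hφ in
lemma comp_value_le (hf : IsBlochFn f) {z : ℂ} (hz : ‖z‖ < 1) :
    (1 - ‖z‖ ^ 2) * ‖deriv (f ∘ φ) z‖ ≤ blochSemi f := by
  rw [comp_deriv_eq hmap hφ hf.1 hz, norm_mul]
  have h1 : (1 - ‖z‖^2) * (‖deriv f (φ z)‖ * ‖deriv φ z‖)
      = ((1 - ‖z‖^2) * ‖deriv φ z‖) * ‖deriv f (φ z)‖ := by ring
  rw [h1]
  have hsp := schwarz_pick hmap hφ hz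
  have h2 : ((1 - ‖z‖^2) * ‖deriv φ z‖) * ‖deriv f (φ z)‖
      ≤ (1 - ‖φ z‖^2) * ‖deriv f (φ z)‖ :=
    mul_le_mul_of_nonneg_right hsp (norm_nonneg _)
  refine le_trans h2 (le_csSup hf.2 ?_)
  exact mem_blochValues (mem_ball_zero_iff.mpr (phi_mem hmap hz))

include hmap hφ in
lemma isBlochFn_comp (hf : IsBlochFn f) : IsBlochFn (f ∘ φ) := by
  refine ⟨hf.1.comp hφ hmap, ⟨blochSemi f, ?_⟩⟩
  rintro r ⟨z, hz, rfl⟩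
  exact comp_value_le hmap hφ hf (mem_ball_zero_iff.mp hz)

include hmap hφ in
lemma blochSemi_comp_le (hf : IsBlochFn f) : blochSemi (f ∘ φ) ≤ blochSemi f :=
  csSup_le (blochValues_nonempty _)
    (by rintro r ⟨z, hz, rfl⟩; exact comp_value_le hmap hφ hf (mem_ball_zero_iff.mp hz))

include hmap hφ in
lemma bddAbove_self_map : BddAbove (blochValues φ) := by
  refine ⟨1, ?_⟩
  rintro r ⟨z, hz, rfl⟩
  have hz1 := mem_ball_zero_iff.mp hz
  have := schwarz_pick hmap hφ hz1
  have h2 : (0:ℝ) ≤ ‖φ z‖^2 := by positivity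
  linarith

include hmap hφ in
lemma blochSemi_self_map_le_one : blochSemi φ ≤ 1 := by
  refine csSup_le (blochValues_nonempty _) ?_
  rintro r ⟨z, hz, rfl⟩
  have hz1 := mem_ball_zero_iff.mp hz
  have := schwarz_pick hmap hφ hz1
  have h2 : (0:ℝ) ≤ ‖φ z‖^2 := by positivity
  linarith

end Comp

lemma isBlochFn_id : IsBlochFn (id : ℂ → ℂ) := by
  refine ⟨differentiableOn_id, ⟨1, ?_⟩⟩
  rintro r ⟨z, hz, rfl⟩
  have hz1 := mem_ball_zero_iff.mp hz
  rw [deriv_id]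
  simp only [norm_one, mul_one]
  nlinarith [norm_nonneg z]

lemma blochSemi_id : blochSemi (id : ℂ → ℂ) = 1 := by
  apply le_antisymm
  · refine csSup_le (blochValues_nonempty _) ?_
    rintro r ⟨z, hz, rfl⟩
    have hz1 := mem_ball_zero_iff.mp hz
    rw [deriv_id]
    simp only [norm_one, mul_one]
    nlinarith [norm_nonneg z]
  · refine le_csSup isBlochFn_id.2 ?_
    refine ⟨0, mem_ball_self one_pos, ?_⟩
    simp

lemma isBlochFn_mob {a : ℂ} (ha : ‖a‖ < 1) : IsBlochFn (mob a) := by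
  refine ⟨mob_diffOn ha, ⟨1, ?_⟩⟩
  rintro r ⟨z, hz, rfl⟩
  have hz1 := mem_ball_zero_iff.mp hz
  rw [mob_deriv_identity ha hz1]
  have : (0:ℝ) ≤ ‖mob a z‖^2 := by positivity
  linarith

lemma blochSemi_mob {a : ℂ} (ha : ‖a‖ < 1) : blochSemi (mob a) = 1 := by
  apply le_antisymm
  · refine csSup_le (blochValues_nonempty _) ?_
    rintro r ⟨z, hz, rfl⟩
    have hz1 := mem_ball_zero_iff.mp hz
    rw [mob_deriv_identity ha hz1]
    have : (0:ℝ) ≤ ‖mob a z‖^2 := by positivity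
    linarith
  · refine le_csSup (isBlochFn_mob ha).2 ?_
    refine ⟨a, mem_ball_zero_iff.mpr ha, ?_⟩
    rw [mob_deriv_identity ha ha, mob_self, norm_zero]
    norm_num

lemma necessity {φ : ℂ → ℂ} (hmap : MapsTo φ (ball (0 : ℂ) 1) (ball (0 : ℂ) 1))
    (hφ : DifferentiableOn ℂ φ (ball (0 : ℂ) 1)) (hiso : IsIsometryCompOp φ) :
    φ 0 = 0 ∧ blochSemi φ = 1 := by
  have hid := hiso id isBlochFn_id
  have heq1 : ‖φ 0‖ + blochSemi φ = 1 := by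
    have h := hid.2
    rw [Function.id_comp] at h
    have : blochNorm id = 1 := by
      unfold blochNorm
      rw [blochSemi_id]
      simp
    rw [this] at h
    exact h
  have haball : ‖φ 0‖ < 1 := phi_mem hmap (by norm_num : ‖(0:ℂ)‖ < 1)
  have hmobtest := hiso (mob (φ 0)) (isBlochFn_mob haball)
  have h2 : blochNorm (mob (φ 0) ∘ φ) = ‖φ 0‖ + 1 := by
    rw [hmobtest.2]
    unfold blochNorm
    rw [blochSemi_mob haball, mob_zero]
  have hcompmap : MapsTo (mob (φ 0) ∘ φ) (ball (0:ℂ) 1) (ball (0:ℂ) 1) :=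
    (mob_mapsTo haball).comp hmap
  have hcompdiff : DifferentiableOn ℂ (mob (φ 0) ∘ φ) (ball (0:ℂ) 1) :=
    (mob_diffOn haball).comp hφ hmap
  have h3 : blochSemi (mob (φ 0) ∘ φ) ≤ 1 := blochSemi_self_map_le_one hcompmap hcompdiff
  have h4 : (mob (φ 0) ∘ φ) 0 = 0 := by
    simp only [Function.comp_apply, mob_self]
  have h5 : blochNorm (mob (φ 0) ∘ φ) = blochSemi (mob (φ 0) ∘ φ) := by
    unfold blochNorm
    rw [h4, norm_zero, zero_add]
  have h6 : ‖φ 0‖ ≤ 0 := by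
    rw [h5] at h2
    linarith
  have ha0 : φ 0 = 0 := norm_le_zero_iff.mp h6
  refine ⟨ha0, ?_⟩
  rw [ha0, norm_zero, zero_add] at heq1
  exact heq1

open Filter Topology in
lemma key_density {φ : ℂ → ℂ} (hmap : MapsTo φ (ball (0 : ℂ) 1) (ball (0 : ℂ) 1))
    (hφ : DifferentiableOn ℂ φ (ball (0 : ℂ) 1))
    (h1 : ∀ δ : ℝ, 0 < δ → ∃ z : ℂ, ‖z‖ < 1 ∧ 1 - δ < (1 - ‖z‖^2) * ‖deriv φ z‖)
    {a : ℂ} (haa : ‖a‖ < 1) {ε : ℝ} (hε : 0 < ε) :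
    ∃ w : ℂ, ‖w‖ < 1 ∧ ‖φ w - a‖ < ε ∧
      (1 - ε) * (1 - ‖φ w‖^2) ≤ (1 - ‖w‖^2) * ‖deriv φ w‖ := by
  choose z hz1 hz2 using fun n : ℕ => h1 (1/(n+1)) (by positivity)
  set t : ℕ → ℝ := fun n => (1 - ‖z n‖^2) * ‖deriv φ (z n)‖ with ht_def
  have hc_lt : ∀ n, ‖φ (z n)‖ < 1 := fun n => phi_mem hmap (hz1 n)
  have ht_le : ∀ n, t n ≤ 1 - ‖φ (z n)‖^2 := fun n => schwarz_pick hmap hφ (hz1 n)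
  have ht_le1 : ∀ n, t n ≤ 1 := fun n => le_trans (ht_le n) (by nlinarith [norm_nonneg (φ (z n))])
  have ht1 : Tendsto t atTop (𝓝 1) := by
    have hlow : Tendsto (fun n : ℕ => 1 - 1/((n:ℝ)+1)) atTop (𝓝 1) := by
      have := tendsto_one_div_add_atTop_nhds_zero_nat (𝕜 := ℝ)
      have h2 := (tendsto_const_nhds (x := (1:ℝ)) (f := atTop)).sub this
      simpa using h2
    refine tendsto_of_tendsto_of_tendsto_of_le_of_le hlow tendsto_const_nhds
      (fun n => le_of_lt (hz2 n)) ht_le1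
  have hsq0 : Tendsto (fun n => ‖φ (z n)‖^2) atTop (𝓝 0) := by
    have hub : Tendsto (fun n : ℕ => 1 - t n) atTop (𝓝 0) := by
      have := (tendsto_const_nhds (x := (1:ℝ)) (f := atTop)).sub ht1
      simpa using this
    exact tendsto_of_tendsto_of_tendsto_of_le_of_le (g := fun _ : ℕ => (0:ℝ))
      (h := fun n => 1 - t n) tendsto_const_nhds hub (fun n => by positivity)
      (fun n => by show ‖φ (z n)‖^2 ≤ 1 - t n; linarith [ht_le n])
  have hnorm0 : Tendsto (fun n => ‖φ (z n)‖) atTop (𝓝 0) := by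
    have hs := (Real.continuous_sqrt.tendsto 0).comp hsq0
    have heq : (fun n => Real.sqrt (‖φ (z n)‖^2)) = fun n => ‖φ (z n)‖ := by
      funext n; exact Real.sqrt_sq (norm_nonneg _)
    rw [Function.comp_def, heq] at hs
    simpa using hs
  have hcz : Tendsto (fun n => φ (z n)) atTop (𝓝 (0:ℂ)) :=
    tendsto_zero_iff_norm_tendsto_zero.mpr hnorm0
  -- the normalized maps and their derivatives at 0
  set lam : ℕ → ℂ := fun n => deriv (nrm φ (z n)) 0 with hlam_def
  set r : ℕ → ℝ := fun n => ‖lam n‖ with hr_def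
  have hr_eq : ∀ n, r n * (1 - ‖φ (z n)‖^2) = t n := fun n => nrm_lambda hmap hφ (hz1 n)
  have hr_le1 : ∀ n, r n ≤ 1 := fun n => nrm_deriv_zero_le_one hmap hφ (hz1 n)
  have hdenpos : ∀ n, (0:ℝ) < 1 - ‖φ (z n)‖^2 := fun n => by nlinarith [hc_lt n, norm_nonneg (φ (z n))]
  have hr1 : Tendsto r atTop (𝓝 1) := by
    have hden : Tendsto (fun n => 1 - ‖φ (z n)‖^2) atTop (𝓝 1) := by
      have := (tendsto_const_nhds (x := (1:ℝ)) (f := atTop)).sub hsq0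
      simpa using this
    have hdiv : Tendsto (fun n => t n / (1 - ‖φ (z n)‖^2)) atTop (𝓝 1) := by
      have := ht1.div hden one_ne_zero
      simpa [Pi.div_def] using this
    refine hdiv.congr (fun n => ?_)
    rw [← hr_eq n, mul_div_cancel_right₀ _ (ne_of_gt (hdenpos n))]
  -- radii
  set s₁ : ℝ := (1 + ‖a‖)/2 with hs₁_def
  set s₂ : ℝ := (3 + ‖a‖)/4 with hs₂_def
  have has₁ : ‖a‖ < s₁ := by rw [hs₁_def]; linarith
  have hs₁s₂ : s₁ < s₂ := by rw [hs₁_def, hs₂_def]; linarith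
  have hs₂1 : s₂ < 1 := by rw [hs₂_def]; linarith
  have hs₁0 : 0 ≤ s₁ := by rw [hs₁_def]; positivity
  -- targets
  set b : ℕ → ℂ := fun n => mob (φ (z n)) a with hb_def
  have hb_lt : ∀ n, ‖b n‖ < 1 := fun n => mob_mem_ball (hc_lt n) haa
  have hb_tendsto : Tendsto b atTop (𝓝 (-a)) := by
    have hnum : Tendsto (fun n => φ (z n) - a) atTop (𝓝 (-a)) := by
      have := hcz.sub (tendsto_const_nhds (x := a))
      simpa using this
    have hden : Tendsto (fun n => 1 - (starRingEnd ℂ) (φ (z n)) * a) atTop (𝓝 1) := by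
      have hstar : Tendsto (fun n => (starRingEnd ℂ) (φ (z n))) atTop (𝓝 (0:ℂ)) := by
        have := (continuous_star.tendsto (0:ℂ)).comp hcz
        simpa [Function.comp_def] using this
      have := (tendsto_const_nhds (x := (1:ℂ)) (f := atTop)).sub (hstar.mul_const a)
      simpa using this
    have := hnum.div hden one_ne_zero
    simpa [hb_def, mob, Pi.div_def] using this
  set u : ℕ → ℂ := fun n => b n / lam n with hu_def
  have hu_norm : Tendsto (fun n => ‖u n‖) atTop (𝓝 ‖a‖) := by
    have h2 : Tendsto (fun n => ‖b n‖ / r n) atTop (𝓝 ‖a‖) := by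
      have := (hb_tendsto.norm).div hr1 one_ne_zero
      simpa [Pi.div_def] using this
    refine h2.congr (fun n => ?_)
    rw [hu_def, hr_def, norm_div]
  have hev_rpos : ∀ᶠ n in atTop, (1:ℝ)/2 < r n :=
    hr1.eventually (eventually_gt_nhds (by norm_num : (1:ℝ)/2 < 1))
  have hev_us₁ : ∀ᶠ n in atTop, ‖u n‖ ≤ s₁ :=
    hu_norm.eventually (eventually_le_nhds has₁)
  -- error bounds from rigidity
  set E : ℕ → ℝ := fun n => s₂^2 * (1 - r n^2) / (1 - s₂) with hE_def
  have hE0 : ∀ n, 0 ≤ E n := fun n => by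
    have h2 := hr_le1 n
    have h3 : (0:ℝ) ≤ r n := norm_nonneg _
    have : (0:ℝ) ≤ 1 - r n ^ 2 := by nlinarith
    have : (0:ℝ) < 1 - s₂ := by linarith
    positivity
  have hE_tendsto : Tendsto E atTop (𝓝 0) := by
    have h2 : Tendsto (fun n => s₂^2 * (1 - r n^2) / (1 - s₂)) atTop
        (𝓝 (s₂^2 * (1 - 1^2) / (1 - s₂))) := by
      exact (((tendsto_const_nhds (x := (1:ℝ))).sub (hr1.pow 2)).const_mul _).div_const _
    simpa using h2
  set E' : ℕ → ℝ := fun n => 2 * E n / (s₂ - s₁) with hE'_def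
  have hE'_tendsto : Tendsto E' atTop (𝓝 0) := by
    have := (hE_tendsto.const_mul 2).div_const (s₂ - s₁)
    simpa [hE'_def] using this
  -- rigidity bound for the normalized maps
  have hrigid : ∀ n, ∀ w : ℂ, ‖w‖ ≤ s₂ → ‖nrm φ (z n) w - lam n * w‖ ≤ E n := by
    intro n w hw
    exact rigid (nrm_diffOn hmap hφ (hz1 n)) (nrm_mapsTo hmap (hz1 n)) (nrm_zero) hs₂1 hw
  have hev_ub : ∀ᶠ n in atTop, ‖nrm φ (z n) (u n) - b n‖ ≤ E n := by
    filter_upwards [hev_rpos, hev_us₁] with n hrp hus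
    have hlamne : lam n ≠ 0 := by
      intro hcon
      have hrn : r n = 0 := by rw [hr_def]; simp [hcon]
      rw [hrn] at hrp
      norm_num at hrp
    have : lam n * u n = b n := by
      rw [hu_def]
      field_simp
    rw [← this]
    exact hrigid n (u n) (le_trans hus (le_of_lt hs₁s₂))
  have hPhiu_tendsto : Tendsto (fun n => nrm φ (z n) (u n)) atTop (𝓝 (-a)) := by
    have hdiff : Tendsto (fun n => nrm φ (z n) (u n) - b n) atTop (𝓝 (0:ℂ)) := by
      exact squeeze_zero_norm' hev_ub hE_tendsto
    have := hdiff.add hb_tendsto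
    simpa using this
  have hPhiu_norm : Tendsto (fun n => ‖nrm φ (z n) (u n)‖) atTop (𝓝 ‖a‖) := by
    have := hPhiu_tendsto.norm
    simpa using this
  -- derivative bound
  have hev_deriv : ∀ᶠ n in atTop, ‖deriv (nrm φ (z n)) (u n) - lam n‖ ≤ E' n := by
    filter_upwards [hev_us₁] with n hus
    have hgd : DifferentiableOn ℂ (fun w => nrm φ (z n) w - lam n * w) (ball (0:ℂ) 1) :=
      (nrm_diffOn hmap hφ (hz1 n)).sub ((differentiable_id.const_mul (lam n)).differentiableOn)
    have hder : deriv (fun w => nrm φ (z n) w - lam n * w) (u n)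
        = deriv (nrm φ (z n)) (u n) - lam n := by
      have hd1 : DifferentiableAt ℂ (nrm φ (z n)) (u n) :=
        (nrm_diffOn hmap hφ (hz1 n)).differentiableAt
          (isOpen_ball.mem_nhds (mem_ball_zero_iff.mpr (lt_of_le_of_lt hus (lt_trans hs₁s₂ hs₂1))))
      have hd2 : HasDerivAt (fun w : ℂ => lam n * w) (lam n) (u n) := by
        simpa using (hasDerivAt_id (u n)).const_mul (lam n)
      have := (hd1.hasDerivAt.sub hd2).deriv
      simpa [Pi.sub_def] using this
    rw [← hder]
    exact deriv_close hs₁0 hs₁s₂ (le_of_lt hs₂1) hgd (hE0 n)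
      (fun w hw => hrigid n w (le_of_lt hw)) hus
  have hderiv_norm : Tendsto (fun n => ‖deriv (nrm φ (z n)) (u n)‖) atTop (𝓝 1) := by
    have hlow : ∀ᶠ n in atTop, r n - E' n ≤ ‖deriv (nrm φ (z n)) (u n)‖ := by
      filter_upwards [hev_deriv] with n h
      have := norm_sub_norm_le (lam n) (deriv (nrm φ (z n)) (u n))
      rw [norm_sub_rev] at h
      rw [hr_def]
      linarith [le_trans this h]
    have hhigh : ∀ᶠ n in atTop, ‖deriv (nrm φ (z n)) (u n)‖ ≤ r n + E' n := by
      filter_upwards [hev_deriv] with n h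
      have := norm_sub_norm_le (deriv (nrm φ (z n)) (u n)) (lam n)
      rw [hr_def]
      linarith [le_trans this h]
    have hl : Tendsto (fun n => r n - E' n) atTop (𝓝 1) := by
      have := hr1.sub hE'_tendsto
      simpa using this
    have hh : Tendsto (fun n => r n + E' n) atTop (𝓝 1) := by
      have := hr1.add hE'_tendsto
      simpa using this
    exact tendsto_of_tendsto_of_tendsto_of_le_of_le' hl hh hlow hhigh
  -- the quotient N/D tends to 1
  have hN : Tendsto (fun n => (1 - ‖u n‖^2) * ‖deriv (nrm φ (z n)) (u n)‖) atTop
      (𝓝 (1 - ‖a‖^2)) := by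
    have h2 : Tendsto (fun n => 1 - ‖u n‖^2) atTop (𝓝 (1 - ‖a‖^2)) :=
      (tendsto_const_nhds (x := (1:ℝ))).sub (hu_norm.pow 2)
    have := h2.mul hderiv_norm
    simpa using this
  have hD : Tendsto (fun n => 1 - ‖nrm φ (z n) (u n)‖^2) atTop (𝓝 (1 - ‖a‖^2)) :=
    (tendsto_const_nhds (x := (1:ℝ))).sub (hPhiu_norm.pow 2)
  have hane : (1:ℝ) - ‖a‖^2 ≠ 0 := by nlinarith [norm_nonneg a]
  have hquot : Tendsto (fun n => ((1 - ‖u n‖^2) * ‖deriv (nrm φ (z n)) (u n)‖)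
      / (1 - ‖nrm φ (z n) (u n)‖^2)) atTop (𝓝 1) := by
    have := hN.div hD hane
    rw [div_self hane] at this
    exact this
  have hev_quot : ∀ᶠ n in atTop, 1 - ε < ((1 - ‖u n‖^2) * ‖deriv (nrm φ (z n)) (u n)‖)
      / (1 - ‖nrm φ (z n) (u n)‖^2) :=
    hquot.eventually (eventually_gt_nhds (by linarith : 1 - ε < 1))
  -- convergence of φ(w n) to a
  have hev_u1 : ∀ᶠ n in atTop, ‖u n‖ < 1 := by
    filter_upwards [hev_us₁] with n h
    exact lt_of_le_of_lt h (lt_trans hs₁s₂ hs₂1)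
  have hφw_tendsto : Tendsto (fun n => mob (φ (z n)) (nrm φ (z n) (u n))) atTop (𝓝 a) := by
    have hnum : Tendsto (fun n => φ (z n) - nrm φ (z n) (u n)) atTop (𝓝 a) := by
      have := hcz.sub hPhiu_tendsto
      simpa using this
    have hden : Tendsto (fun n => 1 - (starRingEnd ℂ) (φ (z n)) * nrm φ (z n) (u n)) atTop
        (𝓝 1) := by
      have hstar : Tendsto (fun n => (starRingEnd ℂ) (φ (z n))) atTop (𝓝 (0:ℂ)) := by
        have := (continuous_star.tendsto (0:ℂ)).comp hcz
        simpa [Function.comp_def] using this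
      have := (tendsto_const_nhds (x := (1:ℂ)) (f := atTop)).sub (hstar.mul hPhiu_tendsto)
      simpa using this
    have := hnum.div hden one_ne_zero
    simpa [mob, Pi.div_def] using this
  have hev_close : ∀ᶠ n in atTop, ‖mob (φ (z n)) (nrm φ (z n) (u n)) - a‖ < ε := by
    have := hφw_tendsto
    rw [Metric.tendsto_atTop] at this
    obtain ⟨N, hN2⟩ := this ε hε
    filter_upwards [eventually_ge_atTop N] with n hn
    have := hN2 n hn
    rwa [dist_eq_norm] at this
  -- pick an index with all the properties
  obtain ⟨n, hrp, hus, hquotn, hclose, hu1⟩ :=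
    (hev_rpos.and (hev_us₁.and (hev_quot.and (hev_close.and hev_u1)))).exists
  have hw1 : ‖mob (z n) (u n)‖ < 1 := mob_mem_ball (hz1 n) hu1
  have hφw_lt : ‖φ (mob (z n) (u n))‖ < 1 := phi_mem hmap hw1
  have hmobeq : mob (φ (z n)) (nrm φ (z n) (u n)) = φ (mob (z n) (u n)) := by
    rw [show nrm φ (z n) (u n) = mob (φ (z n)) (φ (mob (z n) (u n))) from rfl]
    exact mob_invol (hc_lt n) hφw_lt
  have hclose2 : ‖φ (mob (z n) (u n)) - a‖ < ε := by rwa [hmobeq] at hclose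
  have hnrmlt : ‖nrm φ (z n) (u n)‖ < 1 :=
    mem_ball_zero_iff.mp ((nrm_mapsTo hmap (hz1 n)) (mem_ball_zero_iff.mpr hu1))
  have hD : (0:ℝ) < 1 - ‖nrm φ (z n) (u n)‖^2 := by nlinarith [norm_nonneg (nrm φ (z n) (u n))]
  have hgoal_nonneg : (0:ℝ) ≤ 1 - ‖φ (mob (z n) (u n))‖^2 := by nlinarith [norm_nonneg (φ (mob (z n) (u n)))]
  have hinv := nrm_invariance hmap hφ (hz1 n) hu1
  refine ⟨mob (z n) (u n), hw1, hclose2, ?_⟩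
  have e : ((1 - ‖u n‖^2) * ‖deriv (nrm φ (z n)) (u n)‖) / (1 - ‖nrm φ (z n) (u n)‖^2)
      * (1 - ‖φ (mob (z n) (u n))‖^2)
      = (1 - ‖mob (z n) (u n)‖^2) * ‖deriv φ (mob (z n) (u n))‖ := by
    rw [div_mul_eq_mul_div, hinv]
    exact mul_div_cancel_right₀ _ (ne_of_gt hD)
  calc (1 - ε) * (1 - ‖φ (mob (z n) (u n))‖^2)
      ≤ ((1 - ‖u n‖^2) * ‖deriv (nrm φ (z n)) (u n)‖) / (1 - ‖nrm φ (z n) (u n)‖^2)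
        * (1 - ‖φ (mob (z n) (u n))‖^2) :=
        mul_le_mul_of_nonneg_right (le_of_lt hquotn) hgoal_nonneg
    _ = (1 - ‖mob (z n) (u n)‖^2) * ‖deriv φ (mob (z n) (u n))‖ := e

set_option maxHeartbeats 1000000 in
lemma sufficiency {φ : ℂ → ℂ} (hmap : MapsTo φ (ball (0 : ℂ) 1) (ball (0 : ℂ) 1))
    (hφ : DifferentiableOn ℂ φ (ball (0 : ℂ) 1))
    (h0 : φ 0 = 0) (hβ : blochSemi φ = 1) : IsIsometryCompOp φ := by
  have h1 : ∀ δ : ℝ, 0 < δ → ∃ z : ℂ, ‖z‖ < 1 ∧ 1 - δ < (1 - ‖z‖^2) * ‖deriv φ z‖ := by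
    intro δ hδ
    have hlt : 1 - δ < sSup (blochValues φ) := by
      have : sSup (blochValues φ) = 1 := hβ
      rw [this]; linarith
    obtain ⟨v, hv, hvlt⟩ := exists_lt_of_lt_csSup (blochValues_nonempty φ) hlt
    obtain ⟨z, hz, rfl⟩ := hv
    exact ⟨z, mem_ball_zero_iff.mp hz, hvlt⟩
  intro f hf
  have hcompBloch := isBlochFn_comp hmap hφ hf
  refine ⟨hcompBloch, ?_⟩
  have hle : blochSemi (f ∘ φ) ≤ blochSemi f := blochSemi_comp_le hmap hφ hf
  have hge : blochSemi f ≤ blochSemi (f ∘ φ) := by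
    by_contra hcon
    push_neg at hcon
    have hβf0 : 0 ≤ blochSemi f := blochSemi_nonneg f
    have hβ20 : 0 ≤ blochSemi (f ∘ φ) := blochSemi_nonneg _
    set βf := blochSemi f with hβf_def
    set β2 := blochSemi (f ∘ φ) with hβ2_def
    set ε : ℝ := (βf - β2)/(βf + 2) with hε_def
    have hεpos : 0 < ε := div_pos (by linarith) (by linarith)
    have hε1 : ε < 1 := by
      rw [hε_def, div_lt_one (by linarith)]; linarith
    have hεβ2 : βf - ε * (βf + 2) = β2 := by
      rw [hε_def, div_mul_cancel₀ _ (by linarith : βf + 2 ≠ 0)]; ring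
    -- choose a near-extremal point for f
    have h2 : βf - ε < sSup (blochValues f) := by
      have : sSup (blochValues f) = βf := rfl
      rw [this]; linarith
    obtain ⟨v, hv, hvlt⟩ := exists_lt_of_lt_csSup (blochValues_nonempty f) h2
    obtain ⟨a, haball, rfl⟩ := hv
    have haa : ‖a‖ < 1 := mem_ball_zero_iff.mp haball
    have hv_le : (1 - ‖a‖^2) * ‖deriv f a‖ ≤ βf := le_csSup hf.2 (mem_blochValues haball)
    -- continuity of w ↦ (1-‖w‖²)‖f'(w)‖ at a
    have hg_cont : ContinuousAt (fun w : ℂ => (1 - ‖w‖^2) * ‖deriv f w‖) a := by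
      have hd : AnalyticOnNhd ℂ (deriv f) (ball (0:ℂ) 1) :=
        (hf.1.analyticOnNhd isOpen_ball).deriv
      have hderiv_cont : ContinuousAt (deriv f) a := (hd a haball).continuousAt
      exact ((continuous_const.sub ((continuous_norm).pow 2)).continuousAt).mul hderiv_cont.norm
    obtain ⟨δ, hδpos, hδ⟩ := Metric.continuousAt_iff.mp hg_cont ε hεpos
    -- apply the density lemma
    have hminpos : 0 < min ε δ := lt_min hεpos hδpos
    obtain ⟨w, hw1, hwclose, hwratio⟩ := key_density hmap hφ h1 haa hminpos
    have hφw : ‖φ w‖ < 1 := phi_mem hmap hw1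
    -- continuity estimate
    have hgval : (1 - ‖φ w‖^2) * ‖deriv f (φ w)‖ > (1 - ‖a‖^2) * ‖deriv f a‖ - ε := by
      have hdist : dist (φ w) a < δ := by
        rw [dist_eq_norm]
        exact lt_of_lt_of_le hwclose (min_le_right _ _)
      have := hδ hdist
      rw [Real.dist_eq] at this
      have := abs_lt.mp this
      linarith [this.1]
    have hgnonneg : 0 ≤ (1 - ‖φ w‖^2) * ‖deriv f (φ w)‖ := by
      have : (0:ℝ) ≤ 1 - ‖φ w‖^2 := by nlinarith [norm_nonneg (φ w)]
      positivity
    -- the value of f ∘ φ at w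
    have hval_eq : (1 - ‖w‖^2) * ‖deriv (f ∘ φ) w‖
        = ((1 - ‖w‖^2) * ‖deriv φ w‖) * ‖deriv f (φ w)‖ := by
      rw [comp_deriv_eq hmap hφ hf.1 hw1, norm_mul]; ring
    have hratio' : (1 - ε) * (1 - ‖φ w‖^2) ≤ (1 - ‖w‖^2) * ‖deriv φ w‖ := by
      refine le_trans ?_ hwratio
      apply mul_le_mul_of_nonneg_right _ (by nlinarith [norm_nonneg (φ w)])
      · linarith [min_le_left ε δ]
    have hVlower : (1 - ε) * ((1 - ‖φ w‖^2) * ‖deriv f (φ w)‖)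
        ≤ (1 - ‖w‖^2) * ‖deriv (f ∘ φ) w‖ := by
      rw [hval_eq]
      calc (1 - ε) * ((1 - ‖φ w‖^2) * ‖deriv f (φ w)‖)
          = ((1 - ε) * (1 - ‖φ w‖^2)) * ‖deriv f (φ w)‖ := by ring
        _ ≤ ((1 - ‖w‖^2) * ‖deriv φ w‖) * ‖deriv f (φ w)‖ :=
            mul_le_mul_of_nonneg_right hratio' (norm_nonneg _)
    have hVle : (1 - ‖w‖^2) * ‖deriv (f ∘ φ) w‖ ≤ β2 :=
      le_csSup hcompBloch.2 (mem_blochValues (mem_ball_zero_iff.mpr hw1))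
    -- final arithmetic contradiction
    set v := (1 - ‖a‖^2) * ‖deriv f a‖ with hv_def
    set G := (1 - ‖φ w‖^2) * ‖deriv f (φ w)‖ with hG_def
    have hfinal : β2 < (1 - ‖w‖^2) * ‖deriv (f ∘ φ) w‖ := by
      rcases le_or_gt 0 (v - ε) with hcase | hcase
      · have hstep : (1 - ε) * (v - ε) ≤ (1 - ε) * G :=
          mul_le_mul_of_nonneg_left (by linarith [hgval]) (by linarith)
        have hexp : (1 - ε) * (v - ε) = v - ε - ε * v + ε^2 := by ring
        have : β2 < (1 - ε) * (v - ε) := by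
          rw [hexp]
          nlinarith [hvlt, hεβ2, mul_nonneg hεpos.le (sub_nonneg.mpr hv_le), sq_nonneg ε]
        linarith [hVlower, hstep]
      · have hβ2neg : β2 < 0 := by
          nlinarith [hvlt, hεβ2, mul_nonneg hεpos.le hβf0]
        linarith [hVlower, mul_nonneg (by linarith : (0:ℝ) ≤ 1 - ε) hgnonneg]
    linarith [hVle, hfinal]
  have hsemi : blochSemi (f ∘ φ) = blochSemi f := le_antisymm hle hge
  unfold blochNorm
  rw [hsemi]
  congr 2
  simp [Function.comp_apply, h0]

/-- `C_φ` is an isometry on the Bloch space of the unit disk iff `φ(0) = 0` and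
`β_φ = 1`. -/
theorem isometry_iff_fixes_zero_and_blochSemi_eq_one
    (φ : ℂ → ℂ) (hmap : MapsTo φ (ball (0 : ℂ) 1) (ball (0 : ℂ) 1))
    (hφ : DifferentiableOn ℂ φ (ball (0 : ℂ) 1)) :
    IsIsometryCompOp φ ↔ (φ 0 = 0 ∧ blochSemi φ = 1) := by
  constructor
  · exact fun hiso => necessity hmap hφ hiso
  · rintro ⟨h0, hβ⟩
    exact sufficiency hmap hφ h0 hβ
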